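/- Let η̂ := diag(1,−1,−1,−1), let e be an invertible real 4×4 matrix and h a real 4×4 matrix such that f := eᵀ·η̂·h is antisymmetric (this encodes the relation e_{iν} f^i_μ = f_{μν} = −f_{νμ} of equation (77) of the paper). Define θ^i := Σ_μ e_{iμ}·x_μ and η^i := Σ_μ h_{iμ}·x_μ in Λ(ℝ⁴). Then Σ_{i,j,k,l=1}^{4} ε_{ijkl}·θ^i∧θ^j∧θ^k∧η^l = 6·det(e)·tr((eᵀη̂e)⁻¹·f)·vol = 0, since the trace of the product of the symmetric matrix (eᵀη̂e)⁻¹ with the antisymmetric matrix f vanishes. This is the paper's claim (i) of Section 5.1: the mixed terms η∧θ∧θ∧θ in the action vanish. -/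

import Mathlib

open Matrix ExteriorAlgebra

/-- The Levi-Civita symbol on four indices, `lev i j k l` being the sign of the
permutation `(1,2,3,4) ↦ (i,j,k,l)` if it is a permutation and `0` otherwise;
in particular `lev 0 1 2 3 = 1`. -/
noncomputable def lev (i j k l : Fin 4) : ℝ :=
  Matrix.det (Matrix.of fun r c : Fin 4 => if c = ![i, j, k, l] r then (1 : ℝ) else 0)

/-- The degree-one generators `x₁, x₂, x₃, x₄` of the exterior algebra of ℝ⁴. -/
noncomputable def xv (μ : Fin 4) : ExteriorAlgebra ℝ (Fin 4 → ℝ) :=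
  ExteriorAlgebra.ι ℝ (Pi.single μ 1)

/-- The volume element `x₁ ∧ x₂ ∧ x₃ ∧ x₄`. -/
noncomputable def vol : ExteriorAlgebra ℝ (Fin 4 → ℝ) := xv 0 * xv 1 * xv 2 * xv 3

/-- The Minkowski metric `η̂ = diag(1,−1,−1,−1)`. -/
noncomputable def etaHat : Matrix (Fin 4) (Fin 4) ℝ := Matrix.diagonal ![1, -1, -1, -1]

/-- Integer-valued Levi-Civita symbol. -/
def levZ (i j k l : Fin 4) : ℤ :=
  Matrix.det (Matrix.of fun r c : Fin 4 => if c = ![i, j, k, l] r then (1 : ℤ) else 0)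

lemma lev_cast (i j k l : Fin 4) : lev i j k l = ((levZ i j k l : ℤ) : ℝ) := by
  rw [lev, levZ]
  rw [show (((Matrix.of fun r c : Fin 4 => if c = ![i, j, k, l] r then (1 : ℤ) else 0).det : ℤ) : ℝ)
      = (Int.castRingHom ℝ) (Matrix.of fun r c : Fin 4 => if c = ![i, j, k, l] r then (1 : ℤ) else 0).det from rfl,
    RingHom.map_det]
  congr 1
  ext r c
  simp [Matrix.map_apply, apply_ite]

lemma L3Z : ∀ l m : Fin 4,
    (∑ i, ∑ j, ∑ k, levZ i j k l * levZ i j k m) = if l = m then 6 else 0 := by decide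

lemma L3 (l m : Fin 4) :
    (∑ i, ∑ j, ∑ k, lev i j k l * lev i j k m) = if l = m then (6 : ℝ) else 0 := by
  have hz := L3Z l m
  rw [show (if l = m then (6:ℝ) else 0) = ((if l = m then (6:ℤ) else 0 : ℤ) : ℝ) by
    split_ifs <;> norm_num, ← hz]
  push_cast [lev_cast]
  ring

lemma sum_swap5 {M : Type*} [AddCommMonoid M] (g : Fin 4 → Fin 4 → Fin 4 → Fin 4 → Fin 4 → M) :
    (∑ i, ∑ j, ∑ k, ∑ l, ∑ m, g i j k l m) = ∑ l, ∑ m, ∑ i, ∑ j, ∑ k, g i j k l m := by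
  have h1 : ∀ (f : Fin 4 → Fin 4 → Fin 4 → M), (∑ k, ∑ l, ∑ m, f k l m) = ∑ l, ∑ m, ∑ k, f k l m := by
    intro f
    rw [Finset.sum_comm]
    exact Finset.sum_congr rfl fun l _ => Finset.sum_comm
  calc (∑ i, ∑ j, ∑ k, ∑ l, ∑ m, g i j k l m)
      = ∑ i, ∑ j, ∑ l, ∑ m, ∑ k, g i j k l m :=
        Finset.sum_congr rfl fun i _ => Finset.sum_congr rfl fun j _ => h1 _
    _ = ∑ i, ∑ l, ∑ m, ∑ j, ∑ k, g i j k l m :=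
        Finset.sum_congr rfl fun i _ => h1 _
    _ = ∑ l, ∑ m, ∑ i, ∑ j, ∑ k, g i j k l m := h1 _

lemma sum_smul_xv (a : Fin 4 → ℝ) : (∑ μ, a μ • xv μ) = ExteriorAlgebra.ι ℝ a := by
  conv_rhs => rw [← Finset.univ_sum_single a]
  rw [map_sum]
  refine Finset.sum_congr rfl fun μ _ => ?_
  rw [xv, ← _root_.map_smul]
  congr 1
  ext ν
  simp [Pi.single_apply]

noncomputable def G4 : (Fin 4 → ℝ) [⋀^Fin 4]→ₗ[ℝ] ExteriorAlgebra ℝ (Fin 4 → ℝ) :=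
  (LinearMap.toSpanSingleton ℝ _ vol).compAlternatingMap (Pi.basisFun ℝ (Fin 4)).det

lemma iota_prod (v : Fin 4 → (Fin 4 → ℝ)) :
    ExteriorAlgebra.ι ℝ (v 0) * ExteriorAlgebra.ι ℝ (v 1) * ExteriorAlgebra.ι ℝ (v 2) *
      ExteriorAlgebra.ι ℝ (v 3) = (Pi.basisFun ℝ (Fin 4)).det v • vol := by
  have h1 : ExteriorAlgebra.ιMulti ℝ 4 = G4 := by
    apply Module.Basis.ext_alternating (Pi.basisFun ℝ (Fin 4))
    intro g hg
    have hb : Function.Bijective g := (Finite.injective_iff_bijective).1 hg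
    let σ : Equiv.Perm (Fin 4) := Equiv.ofBijective g hb
    have hgσ : (fun i => Pi.basisFun ℝ (Fin 4) (g i)) = (⇑(Pi.basisFun ℝ (Fin 4))) ∘ σ := rfl
    rw [hgσ, AlternatingMap.map_perm, AlternatingMap.map_perm]
    congr 1
    have hL : ExteriorAlgebra.ιMulti ℝ 4 (⇑(Pi.basisFun ℝ (Fin 4))) = vol := by
      rw [ExteriorAlgebra.ιMulti_apply]
      simp [vol, xv, List.ofFn_succ, mul_assoc]
    have hR : G4 (⇑(Pi.basisFun ℝ (Fin 4))) = vol := by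
      show (LinearMap.toSpanSingleton ℝ _ vol) ((Pi.basisFun ℝ (Fin 4)).det ⇑(Pi.basisFun ℝ (Fin 4))) = vol
      rw [Module.Basis.det_self]
      simp
    rw [hL, hR]
  have h2 : ExteriorAlgebra.ιMulti ℝ 4 v = G4 v := by rw [h1]
  simp only [ExteriorAlgebra.ιMulti_apply] at h2
  have h3 : (List.ofFn fun i => ExteriorAlgebra.ι ℝ (v i)).prod =
      ExteriorAlgebra.ι ℝ (v 0) * ExteriorAlgebra.ι ℝ (v 1) * ExteriorAlgebra.ι ℝ (v 2) *
        ExteriorAlgebra.ι ℝ (v 3) := by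
    simp [List.ofFn_succ, mul_assoc]
  rw [h3] at h2
  rw [h2]
  show (LinearMap.toSpanSingleton ℝ _ vol) ((Pi.basisFun ℝ (Fin 4)).det v) = _
  simp [LinearMap.toSpanSingleton_apply]

lemma det_rows (e : Matrix (Fin 4) (Fin 4) ℝ) (i j k m : Fin 4) :
    (Pi.basisFun ℝ (Fin 4)).det ![e i, e j, e k, e m] = lev i j k m * e.det := by
  have hP : Matrix.of (fun r c : Fin 4 => if c = ![i, j, k, m] r then (1 : ℝ) else 0) * e =
      (Matrix.of ![e i, e j, e k, e m])ᵀᵀ := by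
    ext r c
    rw [Matrix.mul_apply]
    simp only [Matrix.of_apply, ite_mul, one_mul, zero_mul, Matrix.transpose_transpose]
    rw [Finset.sum_ite_eq' Finset.univ (![i,j,k,m] r) (fun s => e s c)]
    simp only [Finset.mem_univ, if_true]
    fin_cases r <;> rfl
  have hdet := congrArg Matrix.det hP
  rw [Matrix.det_mul, Matrix.transpose_transpose] at hdet
  rw [Module.Basis.det_apply]
  have : (Pi.basisFun ℝ (Fin 4)).toMatrix ![e i, e j, e k, e m] =
      (Matrix.of ![e i, e j, e k, e m])ᵀ := by
    ext r c
    simp [Module.Basis.toMatrix_apply]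
  rw [this, Matrix.det_transpose, ← hdet, lev, mul_comm]

lemma theta_prod (e : Matrix (Fin 4) (Fin 4) ℝ) (i j k m : Fin 4) :
    ExteriorAlgebra.ι ℝ (e i) * ExteriorAlgebra.ι ℝ (e j) * ExteriorAlgebra.ι ℝ (e k) *
      ExteriorAlgebra.ι ℝ (e m) = (lev i j k m * e.det) • vol := by
  have := iota_prod ![e i, e j, e k, e m]
  simp only [Matrix.cons_val_zero, Matrix.cons_val_one, Matrix.head_cons,
    Matrix.cons_val_two, Matrix.tail_cons, Matrix.cons_val_three] at this
  rw [this, det_rows]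

theorem stmt15 (e h : Matrix (Fin 4) (Fin 4) ℝ) (he : IsUnit e.det)
    (f : Matrix (Fin 4) (Fin 4) ℝ) (hfdef : f = eᵀ * etaHat * h) (hf : fᵀ = -f)
    (θ ηv : Fin 4 → ExteriorAlgebra ℝ (Fin 4 → ℝ))
    (hθ : ∀ i, θ i = ∑ μ, e i μ • xv μ)
    (hη : ∀ i, ηv i = ∑ μ, h i μ • xv μ) :
    ∑ i, ∑ j, ∑ k, ∑ l, lev i j k l • (θ i * θ j * θ k * ηv l) =
      (6 * e.det * ((eᵀ * etaHat * e)⁻¹ * f).trace) • vol ∧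
    ∑ i, ∑ j, ∑ k, ∑ l, lev i j k l • (θ i * θ j * θ k * ηv l) = 0 := by
  have hηdet : IsUnit etaHat.det := by
    have : etaHat.det = -1 := by
      simp [etaHat, Matrix.det_diagonal, Fin.prod_univ_four]
    rw [this]
    exact isUnit_iff_ne_zero.2 (by norm_num)
  have heT : IsUnit (eᵀ).det := by rwa [Matrix.det_transpose]
  set c : Matrix (Fin 4) (Fin 4) ℝ := h * e⁻¹ with hc
  have hce : c * e = h := by
    rw [hc, Matrix.mul_assoc, Matrix.nonsing_inv_mul e he, Matrix.mul_one]
  -- θ and η as ι's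
  have hθι : ∀ i, θ i = ExteriorAlgebra.ι ℝ (e i) := fun i => by rw [hθ i, sum_smul_xv]
  have hηι : ∀ l, ηv l = ExteriorAlgebra.ι ℝ (h l) := fun l => by rw [hη l, sum_smul_xv]
  have hηθ : ∀ l, ηv l = ∑ m, c l m • θ m := by
    intro l
    rw [hηι l]
    have : h l = ∑ m, c l m • e m := by
      funext ν
      rw [← hce]
      simp [Matrix.mul_apply, Finset.sum_apply]
    rw [this, map_sum]
    refine Finset.sum_congr rfl fun m _ => ?_
    rw [hθι m, _root_.map_smul]
  -- main computation
  have main : ∑ i, ∑ j, ∑ k, ∑ l, lev i j k l • (θ i * θ j * θ k * ηv l) =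
      (6 * e.det * c.trace) • vol := by
    have step1 : ∀ i j k l : Fin 4, lev i j k l • (θ i * θ j * θ k * ηv l) =
        ∑ m, (lev i j k l * (c l m * (lev i j k m * e.det))) • vol := by
      intro i j k l
      rw [hηθ l]
      simp only [hθι]
      rw [Finset.mul_sum, Finset.smul_sum]
      refine Finset.sum_congr rfl fun m _ => ?_
      rw [mul_smul_comm, theta_prod e i j k m, smul_smul, smul_smul]
      ring_nf
    calc ∑ i, ∑ j, ∑ k, ∑ l, lev i j k l • (θ i * θ j * θ k * ηv l)
        = ∑ i, ∑ j, ∑ k, ∑ l, ∑ m, (lev i j k l * (c l m * (lev i j k m * e.det))) • vol := by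
          refine Finset.sum_congr rfl fun i _ => Finset.sum_congr rfl fun j _ =>
            Finset.sum_congr rfl fun k _ => Finset.sum_congr rfl fun l _ => step1 i j k l
      _ = (∑ i, ∑ j, ∑ k, ∑ l, ∑ m, lev i j k l * (c l m * (lev i j k m * e.det))) • vol := by
          simp only [Finset.sum_smul]
      _ = (∑ l, ∑ m, ∑ i, ∑ j, ∑ k, lev i j k l * (c l m * (lev i j k m * e.det))) • vol := by
          rw [sum_swap5]
      _ = (∑ l, ∑ m, (c l m * e.det) * (if l = m then (6:ℝ) else 0)) • vol := by
          congr 1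
          refine Finset.sum_congr rfl fun l _ => Finset.sum_congr rfl fun m _ => ?_
          rw [← L3 l m, Finset.mul_sum]
          refine Finset.sum_congr rfl fun i _ => ?_
          rw [Finset.mul_sum]
          refine Finset.sum_congr rfl fun j _ => ?_
          rw [Finset.mul_sum]
          refine Finset.sum_congr rfl fun k _ => ?_
          ring
      _ = (6 * e.det * c.trace) • vol := by
          congr 1
          simp only [mul_ite, mul_zero]
          rw [Finset.sum_congr rfl fun l (_ : l ∈ Finset.univ) =>
            Finset.sum_ite_eq Finset.univ l (fun m => c l m * e.det * 6)]
          simp only [Finset.mem_univ, if_true]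
          rw [Matrix.trace, Finset.mul_sum]
          refine Finset.sum_congr rfl fun l _ => ?_
          rw [Matrix.diag_apply]
          ring
  -- trace identities
  have htr : ((eᵀ * etaHat * e)⁻¹ * f).trace = c.trace := by
    have h1 : (eᵀ * etaHat * e)⁻¹ * f = e⁻¹ * h := by
      rw [hfdef, Matrix.mul_inv_rev, Matrix.mul_inv_rev]
      simp only [Matrix.mul_assoc]
      rw [Matrix.nonsing_inv_mul_cancel_left _ _ heT, Matrix.nonsing_inv_mul_cancel_left _ _ hηdet]
    rw [h1, hc, Matrix.trace_mul_comm]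
  have htr0 : ((eᵀ * etaHat * e)⁻¹ * f).trace = 0 := by
    set S := eᵀ * etaHat * e with hS
    have hSsym : Sᵀ = S := by
      rw [hS, Matrix.transpose_mul, Matrix.transpose_mul, Matrix.transpose_transpose]
      rw [show etaHatᵀ = etaHat from by rw [etaHat, Matrix.diagonal_transpose], Matrix.mul_assoc]
    have hinvsym : (S⁻¹)ᵀ = S⁻¹ := by rw [Matrix.transpose_nonsing_inv, hSsym]
    have h2 : (S⁻¹ * f).trace = -(S⁻¹ * f).trace := by
      conv_lhs => rw [← Matrix.trace_transpose, Matrix.transpose_mul, hf, hinvsym,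
        Matrix.neg_mul, Matrix.trace_neg, Matrix.trace_mul_comm]
    linarith
  have hc0 : c.trace = 0 := by rw [← htr, htr0]
  constructor
  · rw [main, htr, hc0]
  · rw [main, hc0]
    simp
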